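/- For any subset E ⊆ ℕ^m, the function ω_E(s) counting the number of points x ∈ ℕ^m with x₁+...+x_m ≤ s such that no e ∈ E satisfies e ≤ x (componentwise) agrees with a numerical polynomial of degree at most m for all sufficiently large s. -/

import Mathlib

open Filter Finset Polynomial

/-- The binomial coefficient polynomial C(x, k) = x(x-1)...(x-k+1)/k! over ℚ. -/
noncomputable def qchoose (x : ℚ) (k : ℕ) : ℚ :=
  (∏ i ∈ Finset.range k, (x - i)) / (Nat.factorial k)


/-- ω_E(s): number of points of ℕ^m of order ≤ s not componentwise above any element of E. -/
noncomputable def omegaE {m : ℕ} (E : Set (Fin m → ℕ)) (s : ℕ) : ℕ :=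
  Set.ncard {x : Fin m → ℕ | (∑ i, x i) ≤ s ∧ ∀ e ∈ E, ¬ e ≤ x}

lemma finV {m : ℕ} (s : ℕ) (P : (Fin m → ℕ) → Prop) :
    {x : Fin m → ℕ | (∑ i, x i) ≤ s ∧ P x}.Finite := by
  apply Set.Finite.subset (Set.finite_Icc (fun _ => 0) (fun _ => s))
  rintro x ⟨hx, -⟩
  refine ⟨fun i => Nat.zero_le _, fun i => ?_⟩
  exact le_trans (Finset.single_le_sum (f := fun j => x j) (fun j _ => Nat.zero_le _)
    (Finset.mem_univ i)) hx

lemma multiset_equiv (n : ℕ) : ∃ e : Multiset (Fin n) ≃ (Fin n → ℕ),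
    ∀ μ, Multiset.card μ = ∑ i, e μ i := by
  refine ⟨Multiset.toFinsupp.toEquiv.trans Finsupp.equivFunOnFinite, fun μ => ?_⟩
  simp [Finsupp.equivFunOnFinite, Multiset.toFinsupp_apply, Multiset.sum_count_eq_card]

lemma card_simplex (m s : ℕ) :
    Set.ncard {x : Fin m → ℕ | (∑ i, x i) ≤ s} = (s + m).choose m := by
  obtain ⟨e, he⟩ := multiset_equiv (m + 1)
  have e1 : Sym (Fin (m + 1)) s ≃ {y : Fin (m + 1) → ℕ // (∑ i, y i) = s} :=
    Equiv.subtypeEquiv e (fun μ => by rw [← he μ])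
  have e2 : {y : Fin (m + 1) → ℕ // (∑ i, y i) = s} ≃ {x : Fin m → ℕ // (∑ i, x i) ≤ s} := by
    refine ⟨fun y => ⟨Fin.init y.1, ?_⟩, fun x => ⟨Fin.snoc x.1 (s - ∑ i, x.1 i), ?_⟩, ?_, ?_⟩
    · have := y.2
      rw [Fin.sum_univ_castSucc] at this
      exact le_trans (Nat.le_add_right _ _) this.le
    · rw [Fin.sum_univ_castSucc]
      simp only [Fin.snoc_castSucc, Fin.snoc_last]
      exact Nat.add_sub_cancel' x.2
    · rintro ⟨y, hy⟩
      ext i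
      simp only
      rw [Fin.sum_univ_castSucc] at hy
      have hsum : (∑ i, Fin.init y i) = ∑ i : Fin m, y (Fin.castSucc i) := rfl
      have : (s - ∑ i, Fin.init y i) = y (Fin.last m) := by omega
      rw [this, Fin.snoc_init_self]
    · rintro ⟨x, hx⟩
      ext i
      simp [Fin.init_snoc]
  have hcard : Nat.card {x : Fin m → ℕ // (∑ i, x i) ≤ s} = (s + m).choose m := by
    rw [Nat.card_congr (e1.trans e2).symm, Nat.card_eq_fintype_card,
      Sym.card_sym_eq_multichoose, Nat.multichoose_eq, Fintype.card_fin]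
    have h1 : m + 1 + s - 1 = s + m := by omega
    rw [h1]
    have h2 := Nat.choose_symm (show s ≤ s + m by omega)
    rw [show s + m - s = m by omega] at h2
    omega
  rw [← hcard, ← Nat.card_coe_set_eq]
  rfl

lemma choose_poly (m : ℕ) : ∃ p : Polynomial ℚ, p.natDegree ≤ m ∧
    ∀ s : ℕ, p.eval (s : ℚ) = (s + m).choose m := by
  refine ⟨C (1 / (Nat.factorial m : ℚ)) * ∏ i ∈ Finset.range m, (X + C ((m : ℚ) - i)), ?_, ?_⟩
  · refine le_trans (natDegree_mul_le) ?_
    rw [natDegree_C, zero_add]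
    refine le_trans (natDegree_prod_le _ _) ?_
    refine le_trans (Finset.sum_le_sum (fun i _ => le_of_eq (natDegree_X_add_C _))) ?_
    simp
  · intro s
    rw [eval_mul, eval_C, eval_prod]
    simp only [eval_add, eval_X, eval_C]
    have h1 : ((s + m).descFactorial m : ℚ) = ∏ i ∈ Finset.range m, ((s : ℚ) + ((m : ℚ) - i)) := by
      rw [Nat.descFactorial_eq_prod_range, Nat.cast_prod]
      refine Finset.prod_congr rfl (fun i hi => ?_)
      have hi' : i < m := Finset.mem_range.mp hi
      rw [Nat.cast_sub (by omega)]
      push_cast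
      ring
    rw [← h1, Nat.descFactorial_eq_factorial_mul_choose]
    have : (Nat.factorial m : ℚ) ≠ 0 := Nat.cast_ne_zero.mpr (Nat.factorial_ne_zero m)
    push_cast
    field_simp

lemma le_add_sub {m : ℕ} (f y e : Fin m → ℕ) : f ≤ y + e ↔ f - e ≤ y := by
  constructor
  · intro h i; have := h i; simp only [Pi.add_apply, Pi.sub_apply] at *; omega
  · intro h i; have := h i; simp only [Pi.add_apply, Pi.sub_apply] at *; omega

lemma recursion {m : ℕ} (F : Finset (Fin m → ℕ)) (e : Fin m → ℕ) (s : ℕ)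
    (hs : (∑ i, e i) ≤ s) :
    omegaE (↑(insert e F) : Set (Fin m → ℕ)) s
      + omegaE (↑(F.image (fun f => f - e)) : Set (Fin m → ℕ)) (s - ∑ i, e i)
      = omegaE (↑F : Set (Fin m → ℕ)) s := by
  classical
  set B : Set (Fin m → ℕ) := {x | (∑ i, x i) ≤ s ∧ (∀ f ∈ F, ¬ f ≤ x) ∧ ¬ e ≤ x} with hB
  set Cs : Set (Fin m → ℕ) := {x | (∑ i, x i) ≤ s ∧ (∀ f ∈ F, ¬ f ≤ x) ∧ e ≤ x} with hC
  have hBeq : {x : Fin m → ℕ | (∑ i, x i) ≤ s ∧ ∀ f ∈ (↑(insert e F) : Set _), ¬ f ≤ x} = B := by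
    ext x
    simp only [hB, Set.mem_setOf_eq, Finset.coe_insert, Set.mem_insert_iff, Finset.mem_coe]
    constructor
    · rintro ⟨h1, h2⟩
      exact ⟨h1, fun f hf => h2 f (Or.inr hf), h2 e (Or.inl rfl)⟩
    · rintro ⟨h1, h2, h3⟩
      refine ⟨h1, fun f hf => ?_⟩
      rcases hf with rfl | hf
      · exact h3
      · exact h2 f hf
  have hCeq : Cs = (fun y => y + e) ''
      {y : Fin m → ℕ | (∑ i, y i) ≤ s - ∑ i, e i ∧
        ∀ g ∈ (↑(F.image (fun f => f - e)) : Set _), ¬ g ≤ y} := by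
    ext x
    simp only [hC, Set.mem_setOf_eq, Set.mem_image, Finset.coe_image, Set.mem_image,
      Finset.mem_coe]
    constructor
    · rintro ⟨h1, h2, h3⟩
      have hde : x - e + e = x := by funext i; exact Nat.sub_add_cancel (h3 i)
      refine ⟨x - e, ⟨?_, ?_⟩, hde⟩
      · have hsum : ∑ i, (x - e) i = (∑ i, x i) - ∑ i, e i := by
          simp only [Pi.sub_apply]
          exact Finset.sum_tsub_distrib _ (fun i _ => h3 i)
        rw [hsum]; omega
      · rintro g ⟨f, hf, rfl⟩ hle
        have : f ≤ (x - e) + e := (le_add_sub f (x - e) e).mpr hle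
        rw [hde] at this
        exact h2 f hf this
    · rintro ⟨y, ⟨h1, h2⟩, rfl⟩
      have hsum : ∑ i, (y + e) i = (∑ i, y i) + ∑ i, e i := by
        simp only [Pi.add_apply]
        exact Finset.sum_add_distrib
      refine ⟨by rw [hsum]; omega, fun f hf hle => ?_, fun i => Nat.le_add_left _ _⟩
      exact h2 (f - e) ⟨f, hf, rfl⟩ ((le_add_sub f y e).mp hle)
  have hdisj : Disjoint B Cs := by
    rw [Set.disjoint_left]
    rintro x ⟨-, -, h3⟩ ⟨-, -, h4⟩
    exact h3 h4
  have hunion : B ∪ Cs = {x : Fin m → ℕ | (∑ i, x i) ≤ s ∧ ∀ f ∈ (↑F : Set _), ¬ f ≤ x} := by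
    ext x
    simp only [hB, hC, Set.mem_union, Set.mem_setOf_eq, Finset.mem_coe]
    by_cases hex : e ≤ x <;> tauto
  have hBfin : B.Finite := finV s _
  have hCfin : Cs.Finite := finV s _
  have hcards := Set.ncard_union_eq hdisj hBfin hCfin
  rw [hunion] at hcards
  unfold omegaE
  rw [hBeq, hcards]
  congr 1
  rw [hCeq, Set.ncard_image_of_injective _ (add_left_injective e)]

lemma finset_poly {m : ℕ} : ∀ n : ℕ, ∀ F : Finset (Fin m → ℕ), F.card ≤ n →
    ∃ p : Polynomial ℚ, p.natDegree ≤ m ∧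
      ∀ᶠ s : ℕ in Filter.atTop, (omegaE (↑F : Set (Fin m → ℕ)) s : ℚ) = p.eval (s : ℚ) := by
  intro n
  induction n with
  | zero =>
    intro F hF
    rw [Nat.le_zero, Finset.card_eq_zero] at hF
    subst hF
    obtain ⟨p, hdeg, hp⟩ := choose_poly m
    refine ⟨p, hdeg, Filter.Eventually.of_forall (fun s => ?_)⟩
    have hset : {x : Fin m → ℕ | (∑ i, x i) ≤ s ∧ ∀ e ∈ (↑(∅ : Finset (Fin m → ℕ)) : Set _), ¬ e ≤ x}
        = {x : Fin m → ℕ | (∑ i, x i) ≤ s} := by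
      ext x; simp
    rw [omegaE, hset, card_simplex, hp]
  | succ n ih =>
    intro F hF
    rcases Nat.lt_or_ge F.card (n + 1) with hlt | hge
    · exact ih F (by omega)
    · have hne : F.Nonempty := Finset.card_pos.mp (by omega)
      obtain ⟨e, he⟩ := hne
      classical
      set F₀ := F.erase e with hF₀
      have hFins : F = insert e F₀ := by
        rw [hF₀, Finset.insert_erase he]
      have hc0 : F₀.card ≤ n := by
        rw [hF₀, Finset.card_erase_of_mem he]
        omega
      obtain ⟨p, hpdeg, hp⟩ := ih F₀ hc0
      obtain ⟨p', hp'deg, hp'⟩ := ih (F₀.image (fun f => f - e))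
        (le_trans (Finset.card_image_le) hc0)
      set a : ℕ := ∑ i, e i with ha
      refine ⟨p - p'.comp (X - C (a : ℚ)), ?_, ?_⟩
      · refine le_trans (natDegree_sub_le _ _) (max_le hpdeg ?_)
        rw [natDegree_comp, natDegree_X_sub_C, mul_one]
        exact hp'deg
      · rw [Filter.eventually_atTop] at hp hp' ⊢
        obtain ⟨N1, hN1⟩ := hp
        obtain ⟨N2, hN2⟩ := hp'
        refine ⟨N1 + N2 + a, fun s hs => ?_⟩
        have hsa : a ≤ s := by omega
        have hrec := recursion F₀ e s hsa
        rw [← hFins] at hrec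
        have hq : (omegaE (↑F : Set (Fin m → ℕ)) s : ℚ)
            = (omegaE (↑F₀ : Set (Fin m → ℕ)) s : ℚ)
              - (omegaE (↑(F₀.image (fun f => f - e)) : Set (Fin m → ℕ)) (s - a) : ℚ) := by
          have h2 := congrArg (Nat.cast : ℕ → ℚ) hrec
          rw [Nat.cast_add] at h2
          rw [← ha] at h2
          linarith
        rw [hq, hN1 s (by omega), hN2 (s - a) (by omega)]
        rw [eval_sub, eval_comp, eval_sub, eval_X, eval_C, Nat.cast_sub hsa]

lemma dickson_reduce {m : ℕ} (E : Set (Fin m → ℕ)) :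
    ∃ F : Finset (Fin m → ℕ), ∀ x, (∀ e ∈ E, ¬ e ≤ x) ↔ (∀ f ∈ F, ¬ f ≤ x) := by
  classical
  set M : Set (Fin m → ℕ) := {e | e ∈ E ∧ ∀ e' ∈ E, e' ≤ e → e' = e} with hM
  have hanti : IsAntichain (· ≤ ·) M := by
    rintro a ⟨haE, ha⟩ b ⟨hbE, hb⟩ hab hle
    exact hab (hb a haE hle)
  have hwo : ∀ i : Fin m, IsWellOrder ((fun _ : Fin m => ℕ) i) (· < ·) := fun _ => inferInstance
  have hpwo : ∀ T : Set (Fin m → ℕ), T.IsPWO := fun T =>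
    Set.isPWO_of_wellQuasiOrderedLE T
  have hMfin : M.Finite :=
    hanti.finite_of_partiallyWellOrderedOn (hpwo M)
  have hmin : ∀ e ∈ E, ∃ f ∈ M, f ≤ e := by
    intro e heE
    set S : Set (Fin m → ℕ) := {e' | e' ∈ E ∧ e' ≤ e} with hS
    have hSwf : S.IsWF := (hpwo S).isWF
    have hSne : S.Nonempty := ⟨e, heE, le_rfl⟩
    refine ⟨hSwf.min hSne, ⟨(hSwf.min_mem hSne).1, ?_⟩, (hSwf.min_mem hSne).2⟩
    intro e' he'E hle
    have he'S : e' ∈ S := ⟨he'E, le_trans hle (hSwf.min_mem hSne).2⟩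
    have := hSwf.not_lt_min hSne he'S
    by_contra hne
    exact this (lt_of_le_of_ne hle hne)
  refine ⟨hMfin.toFinset, fun x => ?_⟩
  constructor
  · intro h f hf
    exact h f ((hMfin.mem_toFinset.mp hf)).1
  · intro h e heE hle
    obtain ⟨f, hfM, hfe⟩ := hmin e heE
    exact h f (hMfin.mem_toFinset.mpr hfM) (le_trans hfe hle)

/-- The Kolchin counting function ω_E agrees with a numerical polynomial of degree at most m
for all sufficiently large s. -/
theorem omegaE_eventually_polynomial (m : ℕ) (E : Set (Fin m → ℕ)) :
    ∃ p : Polynomial ℚ, p.natDegree ≤ m ∧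
      ∀ᶠ s : ℕ in Filter.atTop, (omegaE E s : ℚ) = p.eval (s : ℚ) := by
  obtain ⟨F, hF⟩ := dickson_reduce E
  have heq : ∀ s, omegaE E s = omegaE (↑F : Set (Fin m → ℕ)) s := by
    intro s
    unfold omegaE
    congr 1
    ext x
    simp only [Set.mem_setOf_eq, Finset.mem_coe]
    exact and_congr_right (fun _ => hF x)
  obtain ⟨p, hdeg, hp⟩ := finset_poly F.card F le_rfl
  exact ⟨p, hdeg, hp.mono (fun s hs => by rw [heq s]; exact hs)⟩
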